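/- For E = E(U, b, f_1, …, f_{k−1}) one has ann^j(E) = 0 × 0 × … × 0 × F × … × F (the zero subspace of U, together with zeros in the first k−j scalar slots and F in the last j scalar slots) for j = 1, …, k, and ann^{k+1}(E) = E. -/

import Mathlib

variable {F : Type*} [Field F] {A : Type*} [AddCommGroup A] [Module F A]

/-- For a bilinear multiplication `mul` on `A` and a submodule `S`, the preimage in `A` of the
annihilator of `A/S`, i.e. `{x | x·A ⊆ S and A·x ⊆ S}`. -/
def annSucc (mul : A →ₗ[F] A →ₗ[F] A) (S : Submodule F A) : Submodule F A where
  carrier := {x | ∀ y : A, mul x y ∈ S ∧ mul y x ∈ S}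
  zero_mem' := by intro y; simp
  add_mem' := by
    intro a b ha hb y
    refine ⟨?_, ?_⟩
    · simpa [map_add, LinearMap.add_apply] using S.add_mem (ha y).1 (hb y).1
    · simpa [map_add, LinearMap.add_apply] using S.add_mem (ha y).2 (hb y).2
  smul_mem' := by
    intro c a ha y
    refine ⟨?_, ?_⟩
    · simpa [map_smul, LinearMap.smul_apply] using S.smul_mem c (ha y).1
    · simpa [map_smul, LinearMap.smul_apply] using S.smul_mem c (ha y).2

/-- The upper annihilating series: `annSeq mul 0 = 0`, and
`annSeq mul (i+1)` is the preimage in `A` of `ann(A / annSeq mul i)`. -/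
def annSeq (mul : A →ₗ[F] A →ₗ[F] A) : ℕ → Submodule F A
  | 0 => ⊥
  | i + 1 => annSucc mul (annSeq mul i)

/-- A basis is natural if the product of distinct basis vectors vanishes. -/
def IsNaturalBasis {ι : Type*} (mul : A →ₗ[F] A →ₗ[F] A) (e : Module.Basis ι F A) : Prop :=
  ∀ i j, i ≠ j → mul (e i) (e j) = 0

/-- An evolution algebra: a commutative algebra admitting a natural basis. -/
def IsEvolutionAlgebra (mul : A →ₗ[F] A →ₗ[F] A) : Prop :=
  (∀ x y, mul x y = mul y x) ∧ ∃ (n : ℕ) (e : Module.Basis (Fin n) F A), IsNaturalBasis mul e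

/-- The (nilpotent) algebra `(A, mul)` has type `[n_1, …, n_r]`:  `r` is the least index with
`ann^r(A) = A` and `n_i = dim ann^i(A) - dim ann^{i-1}(A)`. -/
def HasType (mul : A →ₗ[F] A →ₗ[F] A) (L : List ℕ) : Prop :=
  annSeq mul L.length = ⊤ ∧ (∀ j < L.length, annSeq mul j ≠ ⊤) ∧
  ∀ (i : ℕ) (h : i < L.length),
    L.get ⟨i, h⟩ =
      Module.finrank F (annSeq mul (i + 1)) - Module.finrank F (annSeq mul i)



/-- Auxiliary: the submodule `0 × (zeros in slots `i` with `i + j < m+1`) × F × ⋯ × F`. -/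
def Smod {F : Type*} [Field F] {U : Type*} [AddCommGroup U] [Module F U] (m j : ℕ) :
    Submodule F (U × (Fin (m + 1) → F)) where
  carrier := {p | p.1 = 0 ∧ ∀ i : Fin (m + 1), (i : ℕ) + j < m + 1 → p.2 i = 0}
  zero_mem' := ⟨rfl, fun _ _ => rfl⟩
  add_mem' := by
    rintro a b ⟨ha1, ha2⟩ ⟨hb1, hb2⟩
    exact ⟨by simp [ha1, hb1], fun i hi => by simp [Prod.snd_add, ha2 i hi, hb2 i hi]⟩
  smul_mem' := by
    rintro c a ⟨ha1, ha2⟩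
    exact ⟨by simp [ha1], fun i hi => by simp [ha2 i hi]⟩

lemma mem_Smod {F : Type*} [Field F] {U : Type*} [AddCommGroup U] [Module F U] {m j : ℕ}
    {p : U × (Fin (m + 1) → F)} :
    p ∈ Smod (F := F) m j ↔ p.1 = 0 ∧ ∀ i : Fin (m + 1), (i : ℕ) + j < m + 1 → p.2 i = 0 :=
  Iff.rfl

lemma mem_annSucc {F : Type*} [Field F] {A : Type*} [AddCommGroup A] [Module F A]
    {mul : A →ₗ[F] A →ₗ[F] A} {S : Submodule F A} {x : A} :
    x ∈ annSucc mul S ↔ ∀ y : A, mul x y ∈ S ∧ mul y x ∈ S :=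
  Iff.rfl

/-- For `E = E(U, b, f_1, …, f_{k-1})` (here `k = m+1`) one has, for
`j = 1, …, k`, `ann^j(E) = 0 × 0 × ⋯ × 0 × F × ⋯ × F` (zero in `U` and in the first `k - j`
scalar slots, `F` in the last `j` scalar slots), and `ann^{k+1}(E) = E`. -/
theorem EUbf_annSeq
    (h2 : (2 : F) ≠ 0)
    {U : Type*} [AddCommGroup U] [Module F U] [FiniteDimensional F U]
    (n : ℕ) (hdimU : Module.finrank F U = n)
    (b : U →ₗ[F] U →ₗ[F] F)
    (hbsymm : ∀ x y : U, b x y = b y x)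
    (hbnd : ∀ x : U, (∀ y : U, b x y = 0) → x = 0)
    (m : ℕ)  -- the number of scalar factors is `k = m + 1`
    (f : Fin m → U →ₗ[F] U)
    (hfcomm : ∀ i j, (f i).comp (f j) = (f j).comp (f i))
    (hfsymm : ∀ (i : Fin m) (x y : U), b (f i x) y = b x (f i y))
    (hfdiag : ∀ i : Fin m, ∃ e : Module.Basis (Fin n) F U, ∀ j, ∃ μ : F, f i (e j) = μ • e j)
    (mul : (U × (Fin (m + 1) → F)) →ₗ[F] (U × (Fin (m + 1) → F)) →ₗ[F] (U × (Fin (m + 1) → F)))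
    (hmul : ∀ (x y : U) (α β : Fin (m + 1) → F),
      mul (x, α) (y, β) =
        (0, Fin.cases (motive := fun _ => F) (b x y)
            (fun j : Fin m => b (f j x) y + α j.castSucc * β j.castSucc))) :
    (∀ j : ℕ, 1 ≤ j → j ≤ m + 1 →
      (annSeq mul j : Set (U × (Fin (m + 1) → F))) =
        {p : U × (Fin (m + 1) → F) | p.1 = 0 ∧
          ∀ i : Fin (m + 1), (i : ℕ) + j < m + 1 → p.2 i = 0}) ∧
    annSeq mul (m + 2) = ⊤ := by
  classical
  -- key step
  have hstep : ∀ j : ℕ, j ≤ m → annSucc mul (Smod (F := F) (U := U) m j) = Smod m (j + 1) := by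
    intro j hj
    ext ⟨x, α⟩
    rw [mem_annSucc, mem_Smod]
    constructor
    · intro h
      have hx : x = 0 := by
        apply hbnd
        intro y
        have h1 := (h (y, 0)).1
        rw [hmul] at h1
        have h0 := h1.2 0 (by simp; omega)
        simpa using h0
      refine ⟨hx, ?_⟩
      intro i hi
      have hilt : (i : ℕ) < m := by omega
      set i' : Fin m := ⟨(i : ℕ), hilt⟩ with hi'
      have hcast : i'.castSucc = i := by
        apply Fin.ext; simp [hi']
      have h1 := (h (0, Pi.single i'.castSucc 1)).1
      rw [hmul] at h1
      have h0 := h1.2 i'.succ (by simp [hi']; omega)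
      simp [hx] at h0
      rw [← hcast]
      exact h0
    · rintro ⟨hx, hα⟩
      have hx' : x = 0 := hx
      rintro ⟨y, β⟩
      constructor
      · rw [hmul, mem_Smod]
        refine ⟨rfl, ?_⟩
        intro i hi
        induction i using Fin.cases with
        | zero => simp [hx']
        | succ i' =>
          have hα' : α i'.castSucc = 0 := by
            apply hα
            simp at hi ⊢
            omega
          simp [hx', hα']
      · rw [hmul, mem_Smod]
        refine ⟨rfl, ?_⟩
        intro i hi
        induction i using Fin.cases with
        | zero => simp [hbsymm y x, hx']
        | succ i' =>
          have hα' : α i'.castSucc = 0 := by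
            apply hα
            simp at hi ⊢
            omega
          simp [hbsymm (f i' y) x, hx', hα']
  have hS0 : Smod (F := F) (U := U) m 0 = ⊥ := by
    ext ⟨x, α⟩
    rw [mem_Smod]
    simp only [Submodule.mem_bot, Prod.mk_eq_zero]
    constructor
    · rintro ⟨hx, hα⟩
      refine ⟨hx, funext fun i => hα i (by omega)⟩
    · rintro ⟨hx, hα⟩
      exact ⟨hx, fun i _ => by simp [hα]⟩
  have hseq : ∀ j : ℕ, 1 ≤ j → j ≤ m + 1 → annSeq mul j = Smod (F := F) (U := U) m j := by
    intro j
    induction j with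
    | zero => omega
    | succ j ih =>
      intro _ hj
      show annSucc mul (annSeq mul j) = _
      rcases Nat.eq_zero_or_pos j with h0 | hpos
      · subst h0
        show annSucc mul ⊥ = _
        rw [← hS0]
        exact hstep 0 (by omega)
      · rw [ih hpos (by omega)]
        exact hstep j (by omega)
  constructor
  · intro j h1 h2
    rw [hseq j h1 h2]
    rfl
  · have : annSeq mul (m + 2) = annSucc mul (Smod (F := F) (U := U) m (m + 1)) := by
      show annSucc mul (annSeq mul (m + 1)) = _
      rw [hseq (m + 1) (by omega) le_rfl]
    rw [this]
    rw [eq_top_iff]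
    rintro ⟨x, α⟩ -
    rw [mem_annSucc]
    rintro ⟨y, β⟩
    constructor
    · rw [hmul, mem_Smod]
      exact ⟨rfl, fun i hi => absurd hi (by omega)⟩
    · rw [hmul, mem_Smod]
      exact ⟨rfl, fun i hi => absurd hi (by omega)⟩
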